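/- Let d ≥ 1, let ω = (ω^1, …, ω^d) : [0,1] → ℝ^d be continuously differentiable with |(d/du) ω^i(u)| ≤ M for all u ∈ [0,1] and i = 1, …, d, let 0 ≤ t < s, and let ω(t,s)(u) := √(s−t) · ω((u−t)/(s−t)) be the rescaled path on [t,s]. Then for every multi-index α = (α_1, …, α_k) with entries in {0, 1, …, d}, |I^α_{t,s}[ω(t,s)](1)| ≤ (M^{k₁} / k!) · (s−t)^{‖α‖/2}, where k₁ = card{i : α_i ≠ 0} and ‖α‖ = k + card{i : α_i = 0}. -/

import Mathlib

open MeasureTheory intervalIntegral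

/-- Iterated integral `I^α_{t,u}[η](1)` of the constant `1` along the (augmented) bounded
variation path `η : ℕ → ℝ → ℝ` over `[t,u]`, for a multi-index `α` (a list of indices in
`{0,…,d}`, with `0` denoting the time component).  It is defined recursively by
`I^∅ = 1` and `I^{(α₁,…,α_k)}_{t,u} = ∫_t^u I^{(α₁,…,α_{k-1})}_{t,v} (d/dv) η^{α_k}(v) dv`;
here the head of the list is the outermost (last) integrator `α_k`. -/
noncomputable def iint (η : ℕ → ℝ → ℝ) (t : ℝ) : List ℕ → ℝ → ℝ
  | [], _ => 1
  | a :: rest, u => ∫ v in t..u, iint η t rest v * deriv (η a) v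

/-- Let `d ≥ 1`, let `ω = (ω^1,…,ω^d) : [0,1] → ℝ^d` be continuously
differentiable with `|(d/du) ω^i(u)| ≤ M` for all `u ∈ [0,1]`, `i = 1,…,d` (augmented with
time component `ω^0(u) = u`), let `0 ≤ t < s`, and let `ω(t,s)(u) = √(s-t) · ω((u-t)/(s-t))`
be the rescaled path on `[t,s]` (whose time component is `u ↦ u`).  Then for every multi-index
`α = (α₁,…,α_k)` with entries in `{0,1,…,d}`,
`|I^α_{t,s}[ω(t,s)](1)| ≤ (M^k₁ / k!) · (s-t)^(‖α‖/2)`, where `k₁ = card{i : α_i ≠ 0}` and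
`‖α‖ = k + card{i : α_i = 0}`. -/
lemma key (η : ℕ → ℝ → ℝ) (t s : ℝ) (hts : t ≤ s) (c : ℕ → ℝ) (hc : ∀ a, 0 ≤ c a) :
    ∀ α : List ℕ, (∀ a ∈ α, Continuous (deriv (η a))) →
      (∀ a ∈ α, ∀ v ∈ Set.Icc t s, |deriv (η a) v| ≤ c a) →
      Continuous (iint η t α) ∧ ∀ u ∈ Set.Icc t s,
        |iint η t α u| ≤ (α.map c).prod * (u - t) ^ α.length / (Nat.factorial α.length) := by
  intro α
  induction α with
  | nil =>
      intro _ _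
      constructor
      · show Continuous fun _ => (1 : ℝ)
        exact continuous_const
      · intro u hu; simp [iint]
  | cons a rest ih =>
      intro hcont hbd
      obtain ⟨ihc, ihb⟩ := ih (fun b hb => hcont b (List.mem_cons_of_mem _ hb))
        (fun b hb => hbd b (List.mem_cons_of_mem _ hb))
      have hfc : Continuous fun v => iint η t rest v * deriv (η a) v :=
        ihc.mul (hcont a (List.mem_cons_self))
      have hint : ∀ x y : ℝ, IntervalIntegrable (fun v => iint η t rest v * deriv (η a) v)
          volume x y := fun x y => hfc.intervalIntegrable x y
      refine ⟨?_, ?_⟩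
      · show Continuous fun u => ∫ v in t..u, iint η t rest v * deriv (η a) v
        exact intervalIntegral.continuous_primitive hint t
      · intro u hu
        obtain ⟨htu, hus⟩ := hu
        set C := (rest.map c).prod with hC
        have hC0 : 0 ≤ C := List.prod_nonneg (by
          intro x hx
          obtain ⟨b, _, rfl⟩ := List.mem_map.mp hx
          exact hc b)
        set n := rest.length with hn
        have step1 : |iint η t (a :: rest) u|
            ≤ ∫ v in t..u, |iint η t rest v * deriv (η a) v| := by
          exact intervalIntegral.abs_integral_le_integral_abs htu
        have step2 : (∫ v in t..u, |iint η t rest v * deriv (η a) v|)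
            ≤ ∫ v in t..u, C * (v - t) ^ n / (Nat.factorial n) * c a := by
          have hgint : IntervalIntegrable
              (fun v => C * (v - t) ^ n / (Nat.factorial n) * c a) volume t u :=
            Continuous.intervalIntegrable (by fun_prop) t u
          refine intervalIntegral.integral_mono_on htu (hfc.abs.intervalIntegrable t u)
            hgint ?_
          intro v hv
          have hv' : v ∈ Set.Icc t s := ⟨hv.1, hv.2.trans hus⟩
          rw [abs_mul]
          have h1 := ihb v hv'
          have h2 := hbd a (List.mem_cons_self) v hv'
          exact mul_le_mul h1 h2 (abs_nonneg _) (div_nonneg (mul_nonneg hC0 (pow_nonneg (sub_nonneg.2 hv.1) n)) (Nat.cast_nonneg _))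
        have step3 : (∫ v in t..u, C * (v - t) ^ n / (Nat.factorial n) * c a)
            = C * c a * ((u - t) ^ (n + 1) / (n + 1)) / (Nat.factorial n) := by
          have : (∫ v in t..u, (v - t) ^ n) = (u - t) ^ (n + 1) / (n + 1) := by
            have := intervalIntegral.integral_comp_sub_right (fun x => x ^ n) t (a := t) (b := u)
            rw [this, sub_self, integral_pow]
            push_cast; ring
          rw [show (fun v => C * (v - t) ^ n / (Nat.factorial n) * c a)
              = fun v => (C / (Nat.factorial n) * c a) * (v - t) ^ n by funext v; ring]
          rw [intervalIntegral.integral_const_mul, this]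
          ring
        calc |iint η t (a :: rest) u| ≤ _ := step1
          _ ≤ _ := step2
          _ = C * c a * ((u - t) ^ (n + 1) / (n + 1)) / (Nat.factorial n) := step3
          _ = ((a :: rest).map c).prod * (u - t) ^ (a :: rest).length
                / (Nat.factorial (a :: rest).length) := by
              simp only [List.map_cons, List.prod_cons, List.length_cons, Nat.factorial_succ]
              have h1 : ((Nat.factorial n : ℝ)) ≠ 0 := Nat.cast_ne_zero.2 (Nat.factorial_ne_zero n)
              have h2 : ((n : ℝ) + 1) ≠ 0 := by positivity
              push_cast
              field_simp
              rw [hC]; ring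

theorem stmt_12 (d : ℕ) (hd : 1 ≤ d) (ω : ℕ → ℝ → ℝ) (M : ℝ)
    (hω0 : ∀ u : ℝ, ω 0 u = u)
    (hC1 : ∀ i, 1 ≤ i → i ≤ d → ContDiff ℝ 1 (ω i))
    (hM : ∀ i, 1 ≤ i → i ≤ d → ∀ u ∈ Set.Icc (0 : ℝ) 1, |deriv (ω i) u| ≤ M)
    (t s : ℝ) (ht : 0 ≤ t) (hts : t < s)
    (η : ℕ → ℝ → ℝ)
    (hη : ∀ a u, η a u =
      if a = 0 then u else Real.sqrt (s - t) * ω a ((u - t) / (s - t)))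
    (α : List ℕ) (hα : ∀ a ∈ α, a ≤ d) :
    |iint η t α s|
      ≤ M ^ (α.length - α.count 0) / (Nat.factorial α.length)
          * (s - t) ^ (((α.length + α.count 0 : ℕ) : ℝ) / 2) := by
  have hh : (0:ℝ) < s - t := sub_pos.2 hts
  set r := Real.sqrt (s - t) with hrdef
  have hr : 0 < r := Real.sqrt_pos.2 hh
  have hr2 : r * r = s - t := Real.mul_self_sqrt hh.le
  have hM0 : 0 ≤ M := le_trans (abs_nonneg _)
    (hM 1 le_rfl hd 0 (Set.mem_Icc.2 ⟨le_rfl, zero_le_one⟩))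
  set c : ℕ → ℝ := fun a => if a = 0 then 1 else M / r with hcdef
  have hc : ∀ a, 0 ≤ c a := by
    intro a
    simp only [hcdef]
    split
    · exact zero_le_one
    · exact div_nonneg hM0 hr.le
  have hη0 : η 0 = fun u => u := funext fun u => by rw [hη]; simp
  have hd0 : deriv (η 0) = fun _ => (1:ℝ) := by
    funext v; rw [hη0]; simp
  -- for a ≠ 0 in α
  have hηa : ∀ a, a ≠ 0 → η a = fun u => r * ω a ((u - t) / (s - t)) :=
    fun a ha => funext fun u => by rw [hη, if_neg ha]
  have hcd : ∀ a ∈ α, a ≠ 0 → ContDiff ℝ 1 (η a) := by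
    intro a ha h0
    rw [hηa a h0]
    exact contDiff_const.mul ((hC1 a (Nat.one_le_iff_ne_zero.2 h0) (hα a ha)).comp
      ((contDiff_id.sub contDiff_const).div_const _))
  have hcont : ∀ a ∈ α, Continuous (deriv (η a)) := by
    intro a ha
    by_cases h0 : a = 0
    · subst h0; rw [hd0]; exact continuous_const
    · exact (hcd a ha h0).continuous_deriv le_rfl
  have hbd : ∀ a ∈ α, ∀ v ∈ Set.Icc t s, |deriv (η a) v| ≤ c a := by
    intro a ha v hv
    by_cases h0 : a = 0
    · subst h0
      rw [hd0]
      simp [hcdef]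
    · have ha1 : 1 ≤ a := Nat.one_le_iff_ne_zero.2 h0
      have had : a ≤ d := hα a ha
      set x := (v - t) / (s - t) with hxdef
      have hx : x ∈ Set.Icc (0:ℝ) 1 :=
        ⟨div_nonneg (sub_nonneg.2 hv.1) hh.le,
         (div_le_one hh).2 (sub_le_sub_right hv.2 t)⟩
      have hg : HasDerivAt (fun u => (u - t) / (s - t)) ((s - t)⁻¹) v := by
        simpa [one_div] using ((hasDerivAt_id v).sub_const t).div_const (s - t)
      have hωa : HasDerivAt (ω a) (deriv (ω a) x) x :=
        (((hC1 a ha1 had).differentiable (by norm_num)) x).hasDerivAt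
      have hcomp : HasDerivAt (fun u => ω a ((u - t) / (s - t)))
          (deriv (ω a) x * (s - t)⁻¹) v := hωa.comp v hg
      have hfull : HasDerivAt (η a) (r * (deriv (ω a) x * (s - t)⁻¹)) v := by
        rw [hηa a h0]; exact hcomp.const_mul r
      rw [hfull.deriv]
      have hDM := hM a ha1 had x hx
      have h1 : |r * (deriv (ω a) x * (s - t)⁻¹)|
          = r * (|deriv (ω a) x| * (s - t)⁻¹) := by
        rw [abs_mul, abs_mul, abs_of_pos hr, abs_of_pos (inv_pos.2 hh)]
      rw [h1]
      have h2 : r * (|deriv (ω a) x| * (s - t)⁻¹) ≤ r * (M * (s - t)⁻¹) := by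
        gcongr
      refine h2.trans (le_of_eq ?_)
      have : c a = M / r := by simp [hcdef, h0]
      rw [this, ← hr2]
      field_simp
  have hb := (key η t s hts.le c hc α hcont hbd).2 s ⟨hts.le, le_rfl⟩
  have hprod : ∀ β : List ℕ, (β.map c).prod = (M / r) ^ (β.length - β.count 0) := by
    intro β
    induction β with
    | nil => simp
    | cons a rest ih =>
      have hle : rest.count 0 ≤ rest.length := List.count_le_length
      by_cases h0 : a = 0
      · subst h0
        have hcount : List.count 0 (0 :: rest) = rest.count 0 + 1 := by
          simp [List.count_cons]
        have hone : c 0 = 1 := by simp [hcdef]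
        simp only [List.map_cons, List.prod_cons, List.length_cons, hcount, hone, one_mul, ih]
        congr 1
        omega
      · have hcount : List.count 0 (a :: rest) = rest.count 0 := by
          simp [List.count_cons, h0]
        simp only [List.map_cons, List.prod_cons, List.length_cons, hcount, ih]
        have hc' : c a = M / r := by simp [hcdef, h0]
        rw [hc', show rest.length + 1 - rest.count 0
            = (rest.length - rest.count 0) + 1 by omega, pow_succ]
        ring
  rw [hprod α] at hb
  refine hb.trans (le_of_eq ?_)
  set k := α.length
  set k0 := α.count 0
  have hk0 : k0 ≤ k := List.count_le_length
  have hexp : (s - t) ^ (((k + k0 : ℕ):ℝ)/2) = r ^ (k + k0) := by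
    rw [show (((k + k0 : ℕ):ℝ))/2 = (1/2) * ((k + k0 : ℕ):ℝ) by ring,
      Real.rpow_mul hh.le, Real.rpow_natCast, hrdef, Real.sqrt_eq_rpow]
  rw [hexp]
  have hst : (s - t) ^ k = r ^ (k + k0) * r ^ (k - k0) := by
    rw [← hr2, ← pow_add]
    have : (k + k0) + (k - k0) = k + k := by omega
    rw [this]
    rw [mul_pow, ← pow_add]
  rw [hst, div_pow]
  have hfac : ((Nat.factorial k : ℝ)) ≠ 0 := Nat.cast_ne_zero.2 (Nat.factorial_ne_zero k)
  field_simp
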